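/- arXiv:1304.5278 — 2 statements merged into one kernel-verified Lean document; each statement's English description precedes it below -/
import Mathlib

section
/- For BMTS (PMTS with empty parameter set), the valuation-wise definition of modal refinement coincides with the fixed-relation definition, and on MTS (BMTS where each Φ(s) is a conjunction of positive transition literals) both coincide with the classical MTS modal refinement via may/must transitions. -/
/-- Boolean formulae over a set of atomic propositions `X`. -/
inductive BForm (X : Type) : Type where
  | tt : BForm X
  | var : X → BForm X
  | neg : BForm X → BForm X
  | and : BForm X → BForm X → BForm X
  | or : BForm X → BForm X → BForm X

/-- Satisfaction of a Boolean formula under a valuation (set of true atoms). -/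
def BForm.sat {X : Type} (ν : Set X) : BForm X → Prop
  | .tt => True
  | .var x => x ∈ ν
  | .neg φ => ¬ BForm.sat ν φ
  | .and φ ψ => BForm.sat ν φ ∧ BForm.sat ν ψ
  | .or φ ψ => BForm.sat ν φ ∨ BForm.sat ν ψ

/-- Substitute a formula for each atom. -/
def BForm.map {X Y : Type} (f : X → BForm Y) : BForm X → BForm Y
  | .tt => .tt
  | .var x => f x
  | .neg φ => .neg (BForm.map f φ)
  | .and φ ψ => .and (BForm.map f φ) (BForm.map f ψ)
  | .or φ ψ => .or (BForm.map f φ) (BForm.map f ψ)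

def BForm.xor {X : Type} (φ ψ : BForm X) : BForm X :=
  .or (.and φ (.neg ψ)) (.and (.neg φ) ψ)

def BForm.iff {X : Type} (φ ψ : BForm X) : BForm X :=
  .and (.or (.neg φ) ψ) (.or φ (.neg ψ))

/-- A parametric modal transition system over alphabet `A`, states `S`, parameters `P`. -/
structure PMTS (A S P : Type) : Type where
  T : Set (S × A × S)
  Φ : S → BForm ((A × S) ⊕ P)

/-- A Boolean modal transition system is a PMTS with an empty parameter set. -/
abbrev BMTS (A S : Type) := PMTS A S Empty

/-- `T(s)`: the outgoing transitions of `s`. -/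
def PMTS.Tsucc {A S P : Type} (M : PMTS A S P) (s : S) : Set (A × S) :=
  {p | (s, p.1, p.2) ∈ M.T}

/-- `Tran_ν(s)`: admissible sets of outgoing transitions under parameter valuation `ν`. -/
def PMTS.Tran {A S P : Type} (M : PMTS A S P) (ν : Set P) (s : S) : Set (Set (A × S)) :=
  {E | E ⊆ M.Tsucc s ∧ BForm.sat (Sum.inl '' E ∪ Sum.inr '' ν) (M.Φ s)}

open Classical in
/-- Substitution of truth values for parameters according to a valuation `ν`. -/
noncomputable def paramSubst {X P : Type} (ν : Set P) : X ⊕ P → BForm (X ⊕ Empty)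
  | Sum.inl x => .var (Sum.inl x)
  | Sum.inr p => if p ∈ ν then .tt else .neg .tt

/-- The BMTS `M^ν` induced by a parameter valuation `ν`. -/
noncomputable def PMTS.toBMTS {A S P : Type} (M : PMTS A S P) (ν : Set P) : BMTS A S where
  T := M.T
  Φ := fun s => (M.Φ s).map (paramSubst ν)

/-- The modal-refinement condition on a relation `R`, w.r.t. valuations `μ` and `ν`. -/
def RefCond {A S1 S2 P1 P2 : Type} (M1 : PMTS A S1 P1) (M2 : PMTS A S2 P2)
    (μ : Set P1) (ν : Set P2) (R : Set (S1 × S2)) : Prop :=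
  ∀ p ∈ R, ∀ Ms ∈ M1.Tran μ p.1, ∃ N ∈ M2.Tran ν p.2,
    (∀ q ∈ Ms, ∃ t' : S2, (q.1, t') ∈ N ∧ (q.2, t') ∈ R) ∧
    (∀ q ∈ N, ∃ s' : S1, (q.1, s') ∈ Ms ∧ (s', q.2) ∈ R)

/-- `R` is a modal refinement relation between two BMTS. -/
def IsRefRel {A S1 S2 : Type} (M1 : BMTS A S1) (M2 : BMTS A S2) (R : Set (S1 × S2)) : Prop :=
  RefCond M1 M2 ∅ ∅ R

/-- Modal refinement on BMTS. -/
def BRefines {A S1 S2 : Type} (M1 : BMTS A S1) (M2 : BMTS A S2) (s : S1) (t : S2) : Prop :=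
  ∃ R : Set (S1 × S2), (s, t) ∈ R ∧ IsRefRel M1 M2 R

/-- Modal refinement on PMTS (valuation-wise definition). -/
def PRefines {A S1 S2 P1 P2 : Type} (M1 : PMTS A S1 P1) (M2 : PMTS A S2 P2)
    (s : S1) (t : S2) : Prop :=
  ∀ μ : Set P1, ∃ ν : Set P2, BRefines (M1.toBMTS μ) (M2.toBMTS ν) s t

/-- An implementation: every state's only admissible transition set is its full set of
transitions (i.e. `Φ(s)` is the conjunction of all outgoing transitions). -/
def PMTS.IsImplementation {A S : Type} (M : BMTS A S) : Prop :=
  ∀ s : S, M.Tran ∅ s = {M.Tsucc s}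

/-- Thorough refinement: inclusion of sets of implementations. -/
def ThoroughRefines {A S1 S2 P1 P2 : Type} (M1 : PMTS A S1 P1) (M2 : PMTS A S2 P2)
    (s : S1) (t : S2) : Prop :=
  ∀ (SI : Type) (I : BMTS A SI) (i : SI), I.IsImplementation →
    PRefines I M1 i s → PRefines I M2 i t

/-- A PMTS is deterministic if no state has two distinct successors under the same action. -/
def PMTS.Deterministic {A S P : Type} (M : PMTS A S P) : Prop :=
  ∀ s a t t', (s, a, t) ∈ M.T → (s, a, t') ∈ M.T → t = t'

/-- Global (semantic) consistency: every state has an implementation. -/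
def PMTS.SemConsistent {A S : Type} (M : BMTS A S) : Prop :=
  ∀ s : S, ∃ (SI : Type) (I : BMTS A SI) (i : SI), I.IsImplementation ∧ BRefines I M i s

/-- Parameter substitution used in the de-parameterization, also retagging states
with the valuation. -/
def deParamSubst {A S P : Type} [DecidableEq P] (ν : Finset P) :
    (A × S) ⊕ P → BForm ((A × Option (S × Finset P)) ⊕ Empty)
  | Sum.inl q => .var (Sum.inl (q.1, some (q.2, ν)))
  | Sum.inr p => if p ∈ ν then .tt else .neg .tt

/-- The de-parameterization `M^B` of a PMTS `M` with initial state `s0`.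
The state `none` plays the rôle of `s0^B`. -/
noncomputable def PMTS.deParam {A S P : Type} [Fintype P] [DecidableEq P] (M : PMTS A S P) (s0 : S) :
    BMTS A (Option (S × Finset P)) where
  T := {x | (∃ a s ν, x = (none, a, some (s, ν)) ∧ (s0, a, s) ∈ M.T) ∨
            (∃ s a s' ν, x = (some (s, ν), a, some (s', ν)) ∧ (s, a, s') ∈ M.T)}
  Φ := fun st => match st with
    | none => (Finset.univ : Finset (Finset P)).toList.foldr
        (fun ν acc => BForm.xor ((M.Φ s0).map (deParamSubst ν)) acc) (.neg .tt)
    | some (s, ν) => (M.Φ s).map (deParamSubst ν)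

/-- The set of `a`-successors of a set of states. -/
def PMTS.succSet {A S P : Type} (M : PMTS A S P) (X : Set S) (a : A) : Set S :=
  {s' | ∃ s ∈ X, (s, a, s') ∈ M.T}

/-- The deterministic hull `𝒟(M)` of a PMTS (powerset construction). -/
noncomputable def PMTS.detHull {A S P : Type} [Fintype S] (M : PMTS A S P) :
    PMTS A (Set S) P where
  T := {x | x.2.2 = M.succSet x.1 x.2.1}
  Φ := fun X => ((Set.toFinite X).toFinset).toList.foldr
    (fun s acc => .or ((M.Φ s).map (fun y => match y with
      | Sum.inl q => .var (Sum.inl (q.1, M.succSet X q.1))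
      | Sum.inr p => .var (Sum.inr p))) acc) (.neg .tt)

open Classical in
/-- The parameter-free hull `𝒫(M)` of a PMTS. -/
noncomputable def PMTS.pfHull {A S P : Type} [Fintype P] [DecidableEq P] (M : PMTS A S P) :
    BMTS A S where
  T := M.T
  Φ := fun s => (Finset.univ : Finset (Finset P)).toList.foldr
    (fun ν acc => .or ((M.Φ s).map (paramSubst (↑ν : Set P))) acc) (.neg .tt)

open Classical in
/-- Removing a state `s` (and all transitions involving it) from a BMTS. -/
noncomputable def PMTS.removeState {A S : Type} (M : BMTS A S) (s : S) :
    BMTS A {t : S // t ≠ s} where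
  T := {x | (x.1.1, x.2.1, x.2.2.1) ∈ M.T}
  Φ := fun t => (M.Φ t.1).map (fun y => match y with
    | Sum.inl q => if h : q.2 = s then .neg .tt else .var (Sum.inl (q.1, ⟨q.2, h⟩))
    | Sum.inr e => Empty.elim e)

/-- The PMTS witnessing the unavoidable exponential blowup of de-parameterization:
actions are the parameters, and both steps must take exactly the transitions whose
parameter is true. -/
noncomputable def blowupPMTS (P : Type) [Fintype P] [DecidableEq P] : PMTS P (Fin 3) P where
  T := {x | ∃ p : P, x = (0, p, 1) ∨ x = (1, p, 2)}
  Φ := fun s =>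
    if s = 0 then
      (Finset.univ : Finset P).toList.foldr
        (fun p acc => .and (BForm.iff (.var (Sum.inl (p, (1 : Fin 3)))) (.var (Sum.inr p))) acc) .tt
    else if s = 1 then
      (Finset.univ : Finset P).toList.foldr
        (fun p acc => .and (BForm.iff (.var (Sum.inl (p, (2 : Fin 3)))) (.var (Sum.inr p))) acc) .tt
    else .tt

/-- A classical modal transition system. -/
structure MTS (A S : Type) where
  may : Set (S × A × S)
  must : Set (S × A × S)
  must_sub : must ⊆ may

/-- Classical MTS modal refinement. -/
def MTSRefines {A S1 S2 : Type} (N1 : MTS A S1) (N2 : MTS A S2) (s0 : S1) (t0 : S2) : Prop :=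
  ∃ R : Set (S1 × S2), (s0, t0) ∈ R ∧ ∀ p ∈ R,
    (∀ a s', (p.1, a, s') ∈ N1.may → ∃ t', (p.2, a, t') ∈ N2.may ∧ (s', t') ∈ R) ∧
    (∀ a t', (p.2, a, t') ∈ N2.must → ∃ s', (p.1, a, s') ∈ N1.must ∧ (s', t') ∈ R)

/-- A BMTS corresponds to an MTS when its transitions are the may-transitions and the
admissible transition sets are exactly those between the must- and may-successors
(i.e. `Φ(s)` is the conjunction of the must-transitions of `s`). -/
def Corresponds {A S : Type} (N : MTS A S) (M : BMTS A S) : Prop :=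
  M.T = N.may ∧
  ∀ s, M.Tran ∅ s = {E | {q : A × S | (s, q.1, q.2) ∈ N.must} ⊆ E ∧ E ⊆ M.Tsucc s}

/-- The `Avoid` set: the least set of pairs `(s, 𝒯)` closed under the rules of the
thorough-refinement algorithm for BMTS. -/
inductive Avoid {A S : Type} (M : BMTS A S) : S → Set S → Prop
  | empty (s : S) : Avoid M s ∅
  | step (s : S) (𝒯 : Set S) (Ms : Set (A × S)) (later : A → S → Set (A × S) → Set S)
      (hM : Ms ∈ M.Tran ∅ s)
      (h1 : ∀ t ∈ 𝒯, ∀ Nt ∈ M.Tran ∅ t, ∃ a : A,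
        (∃ ta, (a, ta) ∈ Nt ∧ ∀ sa, (a, sa) ∈ Ms →
          ∀ f, (∃ t' ∈ 𝒯, f ∈ M.Tran ∅ t') → ta ∈ later a sa f) ∨
        (∃ sa, (a, sa) ∈ Ms ∧ ∀ ta, (a, ta) ∈ Nt → ta ∈ later a sa Nt))
      (h2 : ∀ f, (∃ t' ∈ 𝒯, f ∈ M.Tran ∅ t') →
        ∀ a sa, (a, sa) ∈ Ms → Avoid M sa (later a sa f)) :
      Avoid M s 𝒯

/-- The decreasing sequence `Rⁿ_{μ,ν}` of bounded modal refinement relations. -/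
def BoundedRel {A S1 S2 P1 P2 : Type} (M1 : PMTS A S1 P1) (M2 : PMTS A S2 P2)
    (μ : Set P1) (ν : Set P2) : ℕ → Set (S1 × S2)
  | 0 => Set.univ
  | n + 1 => {p | ∀ Ms ∈ M1.Tran μ p.1, ∃ N ∈ M2.Tran ν p.2,
      (∀ q ∈ Ms, ∃ t' : S2, (q.1, t') ∈ N ∧ (q.2, t') ∈ BoundedRel M1 M2 μ ν n) ∧
      (∀ q ∈ N, ∃ s' : S1, (q.1, s') ∈ Ms ∧ (s', q.2) ∈ BoundedRel M1 M2 μ ν n)}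

/-- The de-negation DMTS `M^D` of a BMTS: its states are the admissible transition sets. -/
noncomputable def PMTS.deNeg {A S : Type} [Fintype A] [Fintype S] (M : BMTS A S) :
    BMTS A (Set (A × S)) where
  T := {x | ∃ s' : S, (x.2.1, s') ∈ x.1 ∧ x.2.2 ∈ M.Tran ∅ s'}
  Φ := fun E => ((Set.toFinite E).toFinset).toList.foldr
    (fun q acc => .and
      (((Set.toFinite (M.Tran ∅ q.2)).toFinset).toList.foldr
        (fun M' acc2 => .or (.var (Sum.inl (q.1, M'))) acc2) (.neg .tt)) acc) .tt


private lemma sat_map_paramSubst {X : Type} (mu : Set Empty) (V : Set (X ⊕ Empty))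
    (φ : BForm (X ⊕ Empty)) :
    BForm.sat V (φ.map (paramSubst mu)) ↔ BForm.sat V φ := by
  induction φ with
  | tt => simp [BForm.map, BForm.sat]
  | var x =>
    cases x with
    | inl a => simp [BForm.map, paramSubst, BForm.sat]
    | inr e => exact e.elim
  | neg φ ih => simp [BForm.map, BForm.sat, ih]
  | and φ ψ ih1 ih2 => simp [BForm.map, BForm.sat, ih1, ih2]
  | or φ ψ ih1 ih2 => simp [BForm.map, BForm.sat, ih1, ih2]

private lemma set_empty_eq (ν : Set Empty) : ν = ∅ := Set.eq_empty_of_isEmpty ν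

private lemma tran_toBMTS {A S : Type} (M : BMTS A S) (mu nu : Set Empty) (s : S) :
    (M.toBMTS mu).Tran nu s = M.Tran nu s := by
  ext E
  simp only [PMTS.Tran, PMTS.Tsucc, PMTS.toBMTS, Set.mem_setOf_eq,
    sat_map_paramSubst]

private lemma refCond_toBMTS {A S1 S2 : Type} (M1 : BMTS A S1) (M2 : BMTS A S2)
    (mu nu : Set Empty) (R : Set (S1 × S2)) :
    RefCond (M1.toBMTS mu) (M2.toBMTS nu) ∅ ∅ R ↔ RefCond M1 M2 ∅ ∅ R := by
  unfold RefCond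
  simp only [tran_toBMTS]

private lemma refCond_empty {A S1 S2 : Type} (M1 : BMTS A S1) (M2 : BMTS A S2)
    (mu nu : Set Empty) (R : Set (S1 × S2)) :
    RefCond M1 M2 mu nu R ↔ RefCond M1 M2 ∅ ∅ R := by
  rw [set_empty_eq mu, set_empty_eq nu]

private lemma pRefines_iff {A S1 S2 : Type} (M1 : BMTS A S1) (M2 : BMTS A S2)
    (s0 : S1) (t0 : S2) :
    PRefines M1 M2 s0 t0 ↔
      ∃ R : Set (S1 × S2), (s0, t0) ∈ R ∧
        ∀ μ : Set Empty, ∃ ν : Set Empty, RefCond M1 M2 μ ν R := by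
  constructor
  · intro h
    obtain ⟨ν, R, hmem, hR⟩ := h ∅
    refine ⟨R, hmem, fun μ => ⟨∅, ?_⟩⟩
    rw [refCond_empty]
    exact (refCond_toBMTS M1 M2 ∅ ν R).mp hR
  · rintro ⟨R, hmem, hR⟩
    intro μ
    obtain ⟨ν, hν⟩ := hR ∅
    refine ⟨∅, R, hmem, ?_⟩
    unfold IsRefRel
    rw [refCond_toBMTS]
    exact (refCond_empty M1 M2 ∅ ν R).mp hν

private lemma corresponds_iff {A S1 S2 : Type} (N1 : MTS A S1) (N2 : MTS A S2)
    (M1 : BMTS A S1) (M2 : BMTS A S2)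
    (h1 : Corresponds N1 M1) (h2 : Corresponds N2 M2) (s0 : S1) (t0 : S2) :
    (∃ R : Set (S1 × S2), (s0, t0) ∈ R ∧ RefCond M1 M2 ∅ ∅ R) ↔
      MTSRefines N1 N2 s0 t0 := by
  obtain ⟨hT1, hTran1⟩ := h1
  obtain ⟨hT2, hTran2⟩ := h2
  have mem1 : ∀ (s : S1) (E : Set (A × S1)), E ∈ M1.Tran ∅ s ↔
      ({q : A × S1 | (s, q.1, q.2) ∈ N1.must} ⊆ E ∧ E ⊆ M1.Tsucc s) := by
    intro s E; rw [hTran1 s]; rfl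
  have mem2 : ∀ (t : S2) (E : Set (A × S2)), E ∈ M2.Tran ∅ t ↔
      ({q : A × S2 | (t, q.1, q.2) ∈ N2.must} ⊆ E ∧ E ⊆ M2.Tsucc t) := by
    intro t E; rw [hTran2 t]; rfl
  have tsucc1 : ∀ (s : S1) (a : A) (s' : S1), (a, s') ∈ M1.Tsucc s ↔ (s, a, s') ∈ N1.may := by
    intro s a s'; rw [PMTS.Tsucc, Set.mem_setOf_eq, hT1]
  have tsucc2 : ∀ (t : S2) (a : A) (t' : S2), (a, t') ∈ M2.Tsucc t ↔ (t, a, t') ∈ N2.may := by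
    intro t a t'; rw [PMTS.Tsucc, Set.mem_setOf_eq, hT2]
  constructor
  · rintro ⟨R, hmem, hR⟩
    refine ⟨R, hmem, fun p hp => ⟨?_, ?_⟩⟩
    · -- may condition
      intro a s' hmay
      set Ms : Set (A × S1) := {q | (p.1, q.1, q.2) ∈ N1.must} ∪ {(a, s')} with hMs
      have hMsTran : Ms ∈ M1.Tran ∅ p.1 := by
        rw [mem1]
        constructor
        · exact Set.subset_union_left
        · rintro ⟨b, u⟩ (hb | hb)
          · exact (tsucc1 _ _ _).mpr (N1.must_sub hb)
          · simp only [Set.mem_singleton_iff, Prod.mk.injEq] at hb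
            rw [hb.1, hb.2]
            exact (tsucc1 _ _ _).mpr hmay
      obtain ⟨N, hNTran, hfwd, _⟩ := hR p hp Ms hMsTran
      have hin : (a, s') ∈ Ms := Or.inr rfl
      obtain ⟨t', ht'N, ht'R⟩ := hfwd (a, s') hin
      refine ⟨t', ?_, ht'R⟩
      have := ((mem2 p.2 N).mp hNTran).2 ht'N
      exact (tsucc2 _ _ _).mp this
    · -- must condition
      intro a t' hmust
      set Ms : Set (A × S1) := {q | (p.1, q.1, q.2) ∈ N1.must} with hMs
      have hMsTran : Ms ∈ M1.Tran ∅ p.1 := by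
        rw [mem1]
        exact ⟨le_refl _, fun q hq => (tsucc1 _ _ _).mpr (N1.must_sub hq)⟩
      obtain ⟨N, hNTran, _, hbwd⟩ := hR p hp Ms hMsTran
      have hin : (a, t') ∈ N := ((mem2 p.2 N).mp hNTran).1 hmust
      obtain ⟨s', hs'Ms, hs'R⟩ := hbwd (a, t') hin
      exact ⟨s', hs'Ms, hs'R⟩
  · rintro ⟨R, hmem, hR⟩
    refine ⟨R, hmem, fun p hp Ms hMsTran => ?_⟩
    obtain ⟨hmustMs, hMsSucc⟩ := (mem1 p.1 Ms).mp hMsTran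
    set N : Set (A × S2) := {q | (p.2, q.1, q.2) ∈ N2.must} ∪
      {r : A × S2 | ∃ s', (r.1, s') ∈ Ms ∧ (p.2, r.1, r.2) ∈ N2.may ∧ (s', r.2) ∈ R}
      with hN
    refine ⟨N, ?_, ?_, ?_⟩
    · rw [mem2]
      constructor
      · exact Set.subset_union_left
      · rintro ⟨b, u⟩ (hb | hb)
        · exact (tsucc2 _ _ _).mpr (N2.must_sub hb)
        · obtain ⟨s', _, hmay, _⟩ := hb
          exact (tsucc2 _ _ _).mpr hmay
    · rintro ⟨b, u⟩ hq
      have hmay : (p.1, b, u) ∈ N1.may := (tsucc1 _ _ _).mp (hMsSucc hq)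
      obtain ⟨t', ht'may, ht'R⟩ := (hR p hp).1 b u hmay
      exact ⟨t', Or.inr ⟨u, hq, ht'may, ht'R⟩, ht'R⟩
    · rintro ⟨b, u⟩ (hb | hb)
      · obtain ⟨s', hs'must, hs'R⟩ := (hR p hp).2 b u hb
        exact ⟨s', hmustMs hs'must, hs'R⟩
      · obtain ⟨s', hs'Ms, _, hs'R⟩ := hb
        exact ⟨s', hs'Ms, hs'R⟩

theorem bmts_definitions_coincide_and_mts_classical :
    (∀ (A S1 S2 : Type) (M1 : BMTS A S1) (M2 : BMTS A S2) (s0 : S1) (t0 : S2),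
      PRefines M1 M2 s0 t0 ↔
        ∃ R : Set (S1 × S2), (s0, t0) ∈ R ∧
          ∀ μ : Set Empty, ∃ ν : Set Empty, RefCond M1 M2 μ ν R) ∧
    (∀ (A S1 S2 : Type) (N1 : MTS A S1) (N2 : MTS A S2)
      (M1 : BMTS A S1) (M2 : BMTS A S2),
      Corresponds N1 M1 → Corresponds N2 M2 → ∀ (s0 : S1) (t0 : S2),
        (PRefines M1 M2 s0 t0 ↔ MTSRefines N1 N2 s0 t0) ∧
        ((∃ R : Set (S1 × S2), (s0, t0) ∈ R ∧
            ∀ μ : Set Empty, ∃ ν : Set Empty, RefCond M1 M2 μ ν R) ↔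
          MTSRefines N1 N2 s0 t0)) := by
  have key : ∀ (A S1 S2 : Type) (M1 : BMTS A S1) (M2 : BMTS A S2),
      ∀ (R : Set (S1 × S2)),
      (∀ μ : Set Empty, ∃ ν : Set Empty, RefCond M1 M2 μ ν R) ↔ RefCond M1 M2 ∅ ∅ R := by
    intro A S1 S2 M1 M2 R
    constructor
    · intro h
      obtain ⟨ν, hν⟩ := h ∅
      exact (refCond_empty M1 M2 ∅ ν R).mp hν
    · intro h μ
      exact ⟨∅, (refCond_empty M1 M2 μ ∅ R).mpr h⟩
  constructor
  · intro A S1 S2 M1 M2 s0 t0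
    exact pRefines_iff M1 M2 s0 t0
  · intro A S1 S2 N1 N2 M1 M2 hC1 hC2 s0 t0
    have h2 : (∃ R : Set (S1 × S2), (s0, t0) ∈ R ∧
        ∀ μ : Set Empty, ∃ ν : Set Empty, RefCond M1 M2 μ ν R) ↔
        MTSRefines N1 N2 s0 t0 := by
      rw [← corresponds_iff N1 N2 M1 M2 hC1 hC2 s0 t0]
      constructor
      · rintro ⟨R, hm, hR⟩; exact ⟨R, hm, (key A S1 S2 M1 M2 R).mp hR⟩
      · rintro ⟨R, hm, hR⟩; exact ⟨R, hm, (key A S1 S2 M1 M2 R).mpr hR⟩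
    exact ⟨(pRefines_iff M1 M2 s0 t0).trans h2, h2⟩
end

section
/- Exponential blowup of de-parameterization is unavoidable: for the PMTS with states {s₀, s₁, s₂}, transitions {(s₀,p,s₁), (s₁,p,s₂) | p ∈ P} (using parameters as action labels), and obligations Φ(s₀) = Φ(s₁) = ⋀_{p∈P} ((p, successor) ⇔ p), Φ(s₂) = tt, every BMTS whose initial state has the same set of implementations has at least 2^|P| states. -/
section Blowup

open Classical

/- ### generic satisfaction lemmas -/

lemma sat_foldr_and {X Y : Type} (V : Set Y) (c : X → BForm Y) (l : List X) :
    BForm.sat V (l.foldr (fun x acc => .and (c x) acc) .tt) ↔ ∀ x ∈ l, BForm.sat V (c x) := by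
  induction l with
  | nil => simp [BForm.sat]
  | cons a l ih => simp [BForm.sat, ih]

lemma sat_iff {X : Type} (V : Set X) (φ ψ : BForm X) :
    BForm.sat V (BForm.iff φ ψ) ↔ (BForm.sat V φ ↔ BForm.sat V ψ) := by
  simp only [BForm.iff, BForm.sat]; tauto

lemma sat_map {X Y : Type} (V : Set Y) (f : X → BForm Y) (φ : BForm X) :
    BForm.sat V (BForm.map f φ) ↔ BForm.sat {x | BForm.sat V (f x)} φ := by
  induction φ with
  | tt => simp [BForm.map, BForm.sat]
  | var x => simp [BForm.map, BForm.sat]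
  | neg φ ih => simp [BForm.map, BForm.sat, ih]
  | and φ ψ ih1 ih2 => simp [BForm.map, BForm.sat, ih1, ih2]
  | or φ ψ ih1 ih2 => simp [BForm.map, BForm.sat, ih1, ih2]

lemma mem_inl_union {X P : Type} (E : Set X) (ν : Set P) (x : X) :
    (Sum.inl x ∈ (Sum.inl '' E ∪ Sum.inr '' ν : Set (X ⊕ P))) ↔ x ∈ E := by
  simp

lemma mem_inr_union {X P : Type} (E : Set X) (ν : Set P) (p : P) :
    (Sum.inr p ∈ (Sum.inl '' E ∪ Sum.inr '' ν : Set (X ⊕ P))) ↔ p ∈ ν := by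
  simp

/- ### Tran of toBMTS -/

lemma toBMTS_tran {A S P : Type} (M : PMTS A S P) (ν : Set P) (s : S) :
    (M.toBMTS ν).Tran ∅ s = M.Tran ν s := by
  have hT : (M.toBMTS ν).Tsucc s = M.Tsucc s := rfl
  ext E
  simp only [PMTS.Tran, Set.mem_setOf_eq, PMTS.toBMTS, hT]
  refine and_congr_right fun _ => ?_
  rw [sat_map]
  have : {x | BForm.sat (Sum.inl '' E ∪ Sum.inr '' (∅ : Set Empty)) (paramSubst ν x)}
      = (Sum.inl '' E ∪ Sum.inr '' ν : Set ((A × S) ⊕ P)) := by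
    ext x
    cases x with
    | inl q => simp [paramSubst, BForm.sat]
    | inr p =>
      by_cases hp : p ∈ ν
      · simp [paramSubst, hp, BForm.sat]
      · simp [paramSubst, hp, BForm.sat]
  rw [this]

/- ### Tran of the blowup PMTS -/

/-- the successor sets appearing as the sole admissible transition sets of `blowupPMTS`. -/
def bset {P : Type} (ν : Set P) (j : Fin 3) : Set (P × Fin 3) := {q | q.1 ∈ ν ∧ q.2 = j}

lemma blowup_tsucc0 {P : Type} [Fintype P] [DecidableEq P] :
    (blowupPMTS P).Tsucc 0 = {q : P × Fin 3 | q.2 = 1} := by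
  ext q
  show (∃ p : P, ((0 : Fin 3), q.1, q.2) = (0, p, 1) ∨ ((0 : Fin 3), q.1, q.2) = (1, p, 2)) ↔ _
  constructor
  · rintro ⟨p, hp | hp⟩
    · exact congrArg (Prod.snd ∘ Prod.snd) hp
    · exact absurd ((by decide : ((0:Fin 3) ≠ 1)) (congrArg Prod.fst hp)) not_false
  · intro h1
    exact ⟨q.1, Or.inl (by rw [show ((0:Fin 3), q.1, q.2) = (0, q.1, q.2) from rfl, h1])⟩

lemma blowup_tsucc1 {P : Type} [Fintype P] [DecidableEq P] :
    (blowupPMTS P).Tsucc 1 = {q : P × Fin 3 | q.2 = 2} := by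
  ext q
  show (∃ p : P, ((1 : Fin 3), q.1, q.2) = (0, p, 1) ∨ ((1 : Fin 3), q.1, q.2) = (1, p, 2)) ↔ _
  constructor
  · rintro ⟨p, hp | hp⟩
    · exact absurd ((by decide : ((1:Fin 3) ≠ 0)) (congrArg Prod.fst hp)) not_false
    · exact congrArg (Prod.snd ∘ Prod.snd) hp
  · intro h1
    exact ⟨q.1, Or.inr (by rw [show ((1:Fin 3), q.1, q.2) = (1, q.1, q.2) from rfl, h1])⟩

lemma blowup_tsucc2 {P : Type} [Fintype P] [DecidableEq P] :
    (blowupPMTS P).Tsucc 2 = ∅ := by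
  ext q
  show (∃ p : P, ((2 : Fin 3), q.1, q.2) = (0, p, 1) ∨ ((2 : Fin 3), q.1, q.2) = (1, p, 2)) ↔ _
  simp only [Set.mem_empty_iff_false, iff_false]
  rintro ⟨p, hp | hp⟩
  · exact (by decide : ((2:Fin 3) ≠ 0)) (congrArg Prod.fst hp)
  · exact (by decide : ((2:Fin 3) ≠ 1)) (congrArg Prod.fst hp)

lemma blowup_tran0 {P : Type} [Fintype P] [DecidableEq P] (ν : Set P) :
    (blowupPMTS P).Tran ν 0 = {bset ν 1} := by
  ext E
  simp only [PMTS.Tran, Set.mem_setOf_eq, Set.mem_singleton_iff, blowup_tsucc0]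
  have hΦ : (blowupPMTS P).Φ 0 = (Finset.univ : Finset P).toList.foldr
      (fun p acc => .and (BForm.iff (.var (Sum.inl (p, (1 : Fin 3)))) (.var (Sum.inr p))) acc)
      .tt := by
    simp [blowupPMTS]
  rw [hΦ, sat_foldr_and]
  constructor
  · rintro ⟨hsub, hsat⟩
    have key : ∀ p : P, ((p, (1 : Fin 3)) ∈ E ↔ p ∈ ν) := by
      intro p
      have := hsat p (by simp)
      rw [sat_iff] at this
      simp only [BForm.sat, mem_inl_union, mem_inr_union] at this
      exact this
    ext ⟨p, j⟩
    constructor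
    · intro hq
      have hj : j = 1 := hsub hq
      subst hj
      exact ⟨(key p).mp hq, rfl⟩
    · rintro ⟨h1, h2⟩
      have hj : j = 1 := h2
      subst hj
      exact (key p).mpr h1
  · rintro rfl
    refine ⟨fun q hq => hq.2, fun p _ => ?_⟩
    rw [sat_iff]
    simp only [BForm.sat, mem_inl_union, mem_inr_union]
    constructor
    · rintro ⟨h1, _⟩; exact h1
    · intro hp; exact ⟨hp, rfl⟩

lemma blowup_tran1 {P : Type} [Fintype P] [DecidableEq P] (ν : Set P) :
    (blowupPMTS P).Tran ν 1 = {bset ν 2} := by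
  ext E
  simp only [PMTS.Tran, Set.mem_setOf_eq, Set.mem_singleton_iff, blowup_tsucc1]
  have hΦ : (blowupPMTS P).Φ 1 = (Finset.univ : Finset P).toList.foldr
      (fun p acc => .and (BForm.iff (.var (Sum.inl (p, (2 : Fin 3)))) (.var (Sum.inr p))) acc)
      .tt := by
    simp [blowupPMTS]
  rw [hΦ, sat_foldr_and]
  constructor
  · rintro ⟨hsub, hsat⟩
    have key : ∀ p : P, ((p, (2 : Fin 3)) ∈ E ↔ p ∈ ν) := by
      intro p
      have := hsat p (by simp)
      rw [sat_iff] at this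
      simp only [BForm.sat, mem_inl_union, mem_inr_union] at this
      exact this
    ext ⟨p, j⟩
    constructor
    · intro hq
      have hj : j = 2 := hsub hq
      subst hj
      exact ⟨(key p).mp hq, rfl⟩
    · rintro ⟨h1, h2⟩
      have hj : j = 2 := h2
      subst hj
      exact (key p).mpr h1
  · rintro rfl
    refine ⟨fun q hq => hq.2, fun p _ => ?_⟩
    rw [sat_iff]
    simp only [BForm.sat, mem_inl_union, mem_inr_union]
    constructor
    · rintro ⟨h1, _⟩; exact h1
    · intro hp; exact ⟨hp, rfl⟩

lemma blowup_tran2 {P : Type} [Fintype P] [DecidableEq P] (ν : Set P) :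
    (blowupPMTS P).Tran ν 2 = {∅} := by
  have hΦ : (blowupPMTS P).Φ 2 = .tt := by simp [blowupPMTS]
  ext E
  simp only [PMTS.Tran, Set.mem_setOf_eq, Set.mem_singleton_iff, blowup_tsucc2, hΦ]
  constructor
  · rintro ⟨hsub, _⟩; exact Set.subset_empty_iff.mp hsub
  · rintro rfl; exact ⟨Set.empty_subset _, trivial⟩

/- ### implementations from finite successor functions -/

/-- An implementation built from a function assigning finite successor sets to (ℕ-indexed)
states. -/
noncomputable def mkImpl {P : Type} (f : ℕ → Finset (P × ℕ)) : BMTS P ℕ where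
  T := {x | (x.2.1, x.2.2) ∈ f x.1}
  Φ := fun s => (f s).toList.foldr (fun q acc => .and (.var (Sum.inl q)) acc) .tt

lemma mkImpl_tsucc {P : Type} (f : ℕ → Finset (P × ℕ)) (s : ℕ) :
    (mkImpl f).Tsucc s = ↑(f s) := by
  ext q; simp [mkImpl, PMTS.Tsucc]

lemma mkImpl_tran {P : Type} (f : ℕ → Finset (P × ℕ)) (ν : Set Empty) (s : ℕ) :
    (mkImpl f).Tran ν s = {↑(f s)} := by
  ext E
  simp only [PMTS.Tran, Set.mem_setOf_eq, Set.mem_singleton_iff, mkImpl_tsucc]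
  have hΦ : (mkImpl f).Φ s = (f s).toList.foldr
      (fun q acc => .and (.var (Sum.inl q)) acc) .tt := rfl
  rw [hΦ, sat_foldr_and]
  constructor
  · rintro ⟨hsub, hsat⟩
    apply Set.Subset.antisymm hsub
    intro q hq
    have := hsat q (by simpa using hq)
    simpa [BForm.sat] using this
  · rintro rfl
    refine ⟨le_refl _, fun q hq => ?_⟩
    simp only [BForm.sat, mem_inl_union]
    simpa using hq

lemma mkImpl_toBMTS_tran {P : Type} (f : ℕ → Finset (P × ℕ)) (μ : Set Empty) (s : ℕ) :
    ((mkImpl f).toBMTS μ).Tran ∅ s = {↑(f s)} := by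
  rw [toBMTS_tran, mkImpl_tran]

lemma mkImpl_isImpl {P : Type} (f : ℕ → Finset (P × ℕ)) :
    (mkImpl f).IsImplementation := by
  intro s; rw [mkImpl_tran, mkImpl_tsucc]

end Blowup


section Gadgets

open Classical

lemma mem_pairimg {P : Type} [DecidableEq P] {A : Finset P} {k : ℕ} {q : P × ℕ} :
    q ∈ A.image (fun p => (p, k)) ↔ q.1 ∈ A ∧ q.2 = k := by
  constructor
  · intro hq
    obtain ⟨p, hp, hpq⟩ := Finset.mem_image.mp hq
    subst hpq
    exact ⟨hp, rfl⟩
  · rintro ⟨h1, h2⟩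
    exact Finset.mem_image.mpr ⟨q.1, h1, Prod.ext rfl h2.symm⟩

/-- The (two-step) chain implementation choosing transition set `A` twice. -/
def fA {P : Type} [DecidableEq P] (A : Finset P) : ℕ → Finset (P × ℕ)
  | 0 => A.image (fun p => (p, 1))
  | 1 => A.image (fun p => (p, 2))
  | _ => ∅

lemma fA_ge2 {P : Type} [DecidableEq P] (A : Finset P) : ∀ k, 2 ≤ k → fA A k = ∅
  | 0, h => by omega
  | 1, h => by omega
  | (_ + 2), _ => rfl

/-- `fA A` refines the blowup PMTS. -/
lemma fA_refines {P : Type} [Fintype P] [DecidableEq P] (A : Finset P) :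
    PRefines (mkImpl (fA A)) (blowupPMTS P) 0 0 := by
  intro μ
  refine ⟨↑A, {x : ℕ × Fin 3 | x = (0, 0) ∨ x = (1, 1) ∨ (2 ≤ x.1 ∧ x.2 = 2)}, Or.inl rfl, ?_⟩
  intro p hp Ms hMs
  rw [mkImpl_toBMTS_tran] at hMs
  have hMs' : Ms = ↑(fA A p.1) := hMs
  subst hMs'
  rcases hp with h | h | h
  · subst h
    refine ⟨bset (↑A) 1, ?_, ?_, ?_⟩
    · rw [toBMTS_tran, blowup_tran0]; rfl
    · intro q hq
      have hq' := mem_pairimg.mp (Finset.mem_coe.mp hq)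
      refine ⟨1, ⟨Finset.mem_coe.mpr hq'.1, rfl⟩, ?_⟩
      exact Or.inr (Or.inl (Prod.ext hq'.2 rfl))
    · intro q hq
      refine ⟨1, Finset.mem_coe.mpr (mem_pairimg.mpr ⟨Finset.mem_coe.mp hq.1, rfl⟩), ?_⟩
      exact Or.inr (Or.inl (Prod.ext rfl hq.2))
  · subst h
    refine ⟨bset (↑A) 2, ?_, ?_, ?_⟩
    · rw [toBMTS_tran, blowup_tran1]; rfl
    · intro q hq
      have hq' := mem_pairimg.mp (Finset.mem_coe.mp hq)
      refine ⟨2, ⟨Finset.mem_coe.mpr hq'.1, rfl⟩, ?_⟩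
      exact Or.inr (Or.inr ⟨by omega, rfl⟩)
    · intro q hq
      refine ⟨2, Finset.mem_coe.mpr (mem_pairimg.mpr ⟨Finset.mem_coe.mp hq.1, rfl⟩), ?_⟩
      exact Or.inr (Or.inr ⟨by omega, hq.2⟩)
  · refine ⟨∅, ?_, ?_, ?_⟩
    · rw [toBMTS_tran, h.2, blowup_tran2]; rfl
    · intro q hq
      rw [fA_ge2 A p.1 h.1] at hq
      exact absurd (Finset.mem_coe.mp hq) (Finset.notMem_empty q)
    · intro q hq
      exact absurd hq (Set.notMem_empty q)

/-- Forward/backward data at a non-dead level of a chain. -/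
lemma chain_fwdbwd {P S' : Type} [DecidableEq P] {N : BMTS P S'} {C : Finset P}
    {RC : Set (ℕ × S')} (hRC : IsRefRel (mkImpl (fA C)) N RC) {i j : ℕ}
    (hij : fA C i = C.image (fun p => (p, j))) {u : S'} (hu : (i, u) ∈ RC) :
    ∃ Nt ∈ N.Tran ∅ u, (∀ p ∈ C, ∃ v, (p, v) ∈ Nt ∧ (j, v) ∈ RC) ∧
      (∀ q ∈ Nt, q.1 ∈ C ∧ ((j : ℕ), q.2) ∈ RC) := by
  obtain ⟨Nt, hNt, fwd, bwd⟩ := hRC (i, u) hu (↑(fA C i)) (by rw [mkImpl_tran]; rfl)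
  refine ⟨Nt, hNt, ?_, ?_⟩
  · intro p hp
    obtain ⟨v, hv, hRv⟩ := fwd (p, j)
      (by rw [hij]; exact Finset.mem_coe.mpr (mem_pairimg.mpr ⟨hp, rfl⟩))
    exact ⟨v, hv, hRv⟩
  · intro q hq
    obtain ⟨s', hs', hRs⟩ := bwd q hq
    rw [hij] at hs'
    have h2 := mem_pairimg.mp (Finset.mem_coe.mp hs')
    refine ⟨h2.1, ?_⟩
    have := h2.2
    rw [← this]
    exact hRs

/-- At a dead level of a chain, the related state admits the empty transition set. -/
lemma chain_dead {P S' : Type} [DecidableEq P] {N : BMTS P S'} {C : Finset P}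
    {RC : Set (ℕ × S')} (hRC : IsRefRel (mkImpl (fA C)) N RC) {i : ℕ}
    (hi : fA C i = ∅) {u : S'} (hu : (i, u) ∈ RC) :
    (∅ : Set (P × S')) ∈ N.Tran ∅ u := by
  obtain ⟨Nt, hNt, _, bwd⟩ := hRC (i, u) hu (↑(fA C i)) (by rw [mkImpl_tran]; rfl)
  have hNt' : Nt = ∅ := by
    ext q
    simp only [Set.mem_empty_iff_false, iff_false]
    intro hq
    obtain ⟨s', hs', _⟩ := bwd q hq
    rw [hi] at hs'
    exact absurd (Finset.mem_coe.mp hs') (Finset.notMem_empty _)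
  rwa [hNt'] at hNt

/- ### extracting information from a refinement into the blowup PMTS -/

lemma blow0 {P : Type} [Fintype P] [DecidableEq P] {f : ℕ → Finset (P × ℕ)} {μ : Set Empty}
    {ν : Set P} {R' : Set (ℕ × Fin 3)}
    (href : IsRefRel ((mkImpl f).toBMTS μ) ((blowupPMTS P).toBMTS ν) R')
    {k : ℕ} (hk : (k, (0 : Fin 3)) ∈ R') :
    (∀ q ∈ f k, q.1 ∈ ν ∧ (q.2, (1 : Fin 3)) ∈ R') ∧ (∀ p ∈ ν, ∃ v, (p, v) ∈ f k) := by
  obtain ⟨Nt, hNt, fwd, bwd⟩ := href (k, 0) hk (↑(f k)) (by rw [mkImpl_toBMTS_tran]; rfl)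
  rw [toBMTS_tran, blowup_tran0] at hNt
  have hNt' : Nt = bset ν 1 := hNt
  subst hNt'
  constructor
  · intro q hq
    obtain ⟨t', ht', hR⟩ := fwd q (Finset.mem_coe.mpr hq)
    obtain ⟨h1, h2⟩ := ht'
    refine ⟨h1, ?_⟩
    rw [← h2]
    exact hR
  · intro p hp
    obtain ⟨s', hs', _⟩ := bwd (p, 1) ⟨hp, rfl⟩
    exact ⟨s', Finset.mem_coe.mp hs'⟩

lemma blow1 {P : Type} [Fintype P] [DecidableEq P] {f : ℕ → Finset (P × ℕ)} {μ : Set Empty}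
    {ν : Set P} {R' : Set (ℕ × Fin 3)}
    (href : IsRefRel ((mkImpl f).toBMTS μ) ((blowupPMTS P).toBMTS ν) R')
    {k : ℕ} (hk : (k, (1 : Fin 3)) ∈ R') :
    (∀ q ∈ f k, q.1 ∈ ν ∧ (q.2, (2 : Fin 3)) ∈ R') ∧ (∀ p ∈ ν, ∃ v, (p, v) ∈ f k) := by
  obtain ⟨Nt, hNt, fwd, bwd⟩ := href (k, 1) hk (↑(f k)) (by rw [mkImpl_toBMTS_tran]; rfl)
  rw [toBMTS_tran, blowup_tran1] at hNt
  have hNt' : Nt = bset ν 2 := hNt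
  subst hNt'
  constructor
  · intro q hq
    obtain ⟨t', ht', hR⟩ := fwd q (Finset.mem_coe.mpr hq)
    obtain ⟨h1, h2⟩ := ht'
    refine ⟨h1, ?_⟩
    rw [← h2]
    exact hR
  · intro p hp
    obtain ⟨s', hs', _⟩ := bwd (p, 2) ⟨hp, rfl⟩
    exact ⟨s', Finset.mem_coe.mp hs'⟩

lemma blow2 {P : Type} [Fintype P] [DecidableEq P] {f : ℕ → Finset (P × ℕ)} {μ : Set Empty}
    {ν : Set P} {R' : Set (ℕ × Fin 3)}
    (href : IsRefRel ((mkImpl f).toBMTS μ) ((blowupPMTS P).toBMTS ν) R')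
    {k : ℕ} (hk : (k, (2 : Fin 3)) ∈ R') : f k = ∅ := by
  obtain ⟨Nt, hNt, fwd, _⟩ := href (k, 2) hk (↑(f k)) (by rw [mkImpl_toBMTS_tran]; rfl)
  rw [toBMTS_tran, blowup_tran2] at hNt
  have hNt' : Nt = ∅ := hNt
  subst hNt'
  apply Finset.eq_empty_of_forall_notMem
  intro q hq
  obtain ⟨t', ht', _⟩ := fwd q (Finset.mem_coe.mpr hq)
  exact absurd ht' (Set.notMem_empty _)

end Gadgets


section Main

open Classical

/-- The mixed gadget: first step `A` (with a copy `2` of the distinguished midpoint),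
generic branch does `A`-then-stop, distinguished branch does `B`-then-stop. -/
noncomputable def gMix {P : Type} [DecidableEq P] (A L B : Finset P) : ℕ → Finset (P × ℕ)
  | 0 => A.image (fun p => (p, 1)) ∪ L.image (fun p => (p, 2))
  | 1 => A.image (fun p => (p, 3))
  | 2 => B.image (fun p => (p, 4))
  | _ => ∅

/-- The deep gadget: first step `A`, distinguished branch restarts the whole
two-step chain. -/
noncomputable def gDeep {P : Type} [DecidableEq P] (A L : Finset P) : ℕ → Finset (P × ℕ)
  | 0 => A.image (fun p => (p, 1)) ∪ L.image (fun p => (p, 2))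
  | 1 => A.image (fun p => (p, 3))
  | 2 => A.image (fun p => (p, 4))
  | 4 => A.image (fun p => (p, 5))
  | _ => ∅

lemma mix_eq {P : Type} [Fintype P] [DecidableEq P] {S' : Type} (N : BMTS P S') (n0 : S')
    (h : ∀ (SI : Type) (I : BMTS P SI) (i : SI), I.IsImplementation →
      (PRefines I (blowupPMTS P) i 0 ↔ BRefines I N i n0))
    (A B : Finset P) (RA RB : Set (ℕ × S')) (NsetA : Set (P × S')) (tA : S')
    (hRA : IsRefRel (mkImpl (fA A)) N RA)
    (hRB : IsRefRel (mkImpl (fA B)) N RB)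
    (hNA : NsetA ∈ N.Tran ∅ n0)
    (fwdA : ∀ p ∈ A, ∃ u, (p, u) ∈ NsetA ∧ ((1 : ℕ), u) ∈ RA)
    (bwdA : ∀ q ∈ NsetA, q.1 ∈ A ∧ ((1 : ℕ), q.2) ∈ RA)
    (htAmem : ∃ p, (p, tA) ∈ NsetA)
    (htB : ((1 : ℕ), tA) ∈ RB) :
    A = B := by
  classical
  set L : Finset P := A.filter (fun p => (p, tA) ∈ NsetA) with hLdef
  have hLmem : ∀ p ∈ L, (p, tA) ∈ NsetA := fun p hp => (Finset.mem_filter.mp hp).2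
  have hLsub : ∀ p ∈ L, p ∈ A := fun p hp => (Finset.mem_filter.mp hp).1
  have hLne : L.Nonempty := by
    obtain ⟨p, hp⟩ := htAmem
    exact ⟨p, Finset.mem_filter.mpr ⟨(bwdA (p, tA) hp).1, hp⟩⟩
  -- Step 1: the gadget refines N at n0
  have hBref : BRefines (mkImpl (gMix A L B)) N 0 n0 := by
    refine ⟨{x : ℕ × S' | x = (0, n0) ∨ (x.1 = 1 ∧ ((1 : ℕ), x.2) ∈ RA)
      ∨ (x.1 = 3 ∧ ((2 : ℕ), x.2) ∈ RA) ∨ (x.1 = 2 ∧ ((1 : ℕ), x.2) ∈ RB)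
      ∨ (x.1 = 4 ∧ ((2 : ℕ), x.2) ∈ RB)}, Or.inl rfl, ?_⟩
    rintro ⟨k, u⟩ hp Ms hMs
    rw [mkImpl_tran] at hMs
    have hMs' : Ms = ↑(gMix A L B k) := hMs
    subst hMs'
    rcases hp with hp | ⟨hk, hu⟩ | ⟨hk, hu⟩ | ⟨hk, hu⟩ | ⟨hk, hu⟩
    · -- root
      obtain ⟨rfl, rfl⟩ : k = 0 ∧ u = n0 := ⟨congrArg Prod.fst hp, congrArg Prod.snd hp⟩
      refine ⟨NsetA, hNA, ?_, ?_⟩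
      · intro q hq
        rcases Finset.mem_union.mp (Finset.mem_coe.mp hq) with hq1 | hq2
        · obtain ⟨hqA, hq2⟩ := mem_pairimg.mp hq1
          obtain ⟨v, hv, hRv⟩ := fwdA q.1 hqA
          exact ⟨v, hv, Or.inr (Or.inl ⟨hq2, hRv⟩)⟩
        · obtain ⟨hqL, hq2⟩ := mem_pairimg.mp hq2
          exact ⟨tA, hLmem q.1 hqL, Or.inr (Or.inr (Or.inr (Or.inl ⟨hq2, htB⟩)))⟩
      · intro q hq
        obtain ⟨hqA, hqR⟩ := bwdA q hq
        exact ⟨1, Finset.mem_coe.mpr (Finset.mem_union.mpr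
          (Or.inl (mem_pairimg.mpr ⟨hqA, rfl⟩))), Or.inr (Or.inl ⟨rfl, hqR⟩)⟩
    · -- k = 1 : A-then-stop
      subst hk
      obtain ⟨Nt, hNt, fwd', bwd'⟩ := chain_fwdbwd hRA (rfl :
        fA A 1 = A.image (fun p => (p, 2))) hu
      refine ⟨Nt, hNt, ?_, ?_⟩
      · intro q hq
        obtain ⟨hqA, hq2⟩ := mem_pairimg.mp (Finset.mem_coe.mp hq)
        obtain ⟨v, hv, hRv⟩ := fwd' q.1 hqA
        exact ⟨v, hv, Or.inr (Or.inr (Or.inl ⟨hq2, hRv⟩))⟩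
      · intro q hq
        obtain ⟨hqA, hqR⟩ := bwd' q hq
        exact ⟨3, Finset.mem_coe.mpr (mem_pairimg.mpr ⟨hqA, rfl⟩),
          Or.inr (Or.inr (Or.inl ⟨rfl, hqR⟩))⟩
    · -- k = 3 : dead
      subst hk
      refine ⟨∅, chain_dead hRA (rfl : fA A 2 = ∅) hu, ?_, ?_⟩
      · intro q hq
        exact absurd (Finset.mem_coe.mp hq) (Finset.notMem_empty q)
      · intro q hq
        exact absurd hq (Set.notMem_empty q)
    · -- k = 2 : B-then-stop
      subst hk
      obtain ⟨Nt, hNt, fwd', bwd'⟩ := chain_fwdbwd hRB (rfl :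
        fA B 1 = B.image (fun p => (p, 2))) hu
      refine ⟨Nt, hNt, ?_, ?_⟩
      · intro q hq
        obtain ⟨hqB, hq2⟩ := mem_pairimg.mp (Finset.mem_coe.mp hq)
        obtain ⟨v, hv, hRv⟩ := fwd' q.1 hqB
        exact ⟨v, hv, Or.inr (Or.inr (Or.inr (Or.inr ⟨hq2, hRv⟩)))⟩
      · intro q hq
        obtain ⟨hqB, hqR⟩ := bwd' q hq
        exact ⟨4, Finset.mem_coe.mpr (mem_pairimg.mpr ⟨hqB, rfl⟩),
          Or.inr (Or.inr (Or.inr (Or.inr ⟨rfl, hqR⟩)))⟩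
    · -- k = 4 : dead
      subst hk
      refine ⟨∅, chain_dead hRB (rfl : fA B 2 = ∅) hu, ?_, ?_⟩
      · intro q hq
        exact absurd (Finset.mem_coe.mp hq) (Finset.notMem_empty q)
      · intro q hq
        exact absurd hq (Set.notMem_empty q)
  -- Step 2: hence the gadget refines the blowup PMTS; extract the valuation
  have hPref := (h ℕ (mkImpl (gMix A L B)) 0 (mkImpl_isImpl _)).mpr hBref
  obtain ⟨ν, R', hm', href'⟩ := hPref (∅ : Set Empty)
  obtain ⟨fw0, bw0⟩ := blow0 href' hm'
  have hAν : ∀ p ∈ A, p ∈ ν := by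
    intro p hp
    exact (fw0 (p, 1) (Finset.mem_union.mpr (Or.inl (mem_pairimg.mpr ⟨hp, rfl⟩)))).1
  have hνA : ∀ p ∈ ν, p ∈ A := by
    intro p hp
    obtain ⟨v, hv⟩ := bw0 p hp
    rcases Finset.mem_union.mp hv with h1 | h2
    · exact (mem_pairimg.mp h1).1
    · exact hLsub p (mem_pairimg.mp h2).1
  obtain ⟨pbar, hpbar⟩ := hLne
  have h21 : ((2 : ℕ), (1 : Fin 3)) ∈ R' :=
    (fw0 (pbar, 2) (Finset.mem_union.mpr (Or.inr (mem_pairimg.mpr ⟨hpbar, rfl⟩)))).2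
  obtain ⟨fw1, bw1⟩ := blow1 href' h21
  ext p
  constructor
  · intro hp
    obtain ⟨v, hv⟩ := bw1 p (hAν p hp)
    exact (mem_pairimg.mp hv).1
  · intro hp
    exact hνA p (fw1 (p, 4) (mem_pairimg.mpr ⟨hp, rfl⟩)).1

lemma deep_false {P : Type} [Fintype P] [DecidableEq P] {S' : Type} (N : BMTS P S') (n0 : S')
    (h : ∀ (SI : Type) (I : BMTS P SI) (i : SI), I.IsImplementation →
      (PRefines I (blowupPMTS P) i 0 ↔ BRefines I N i n0))
    (A : Finset P) (RA : Set (ℕ × S')) (NsetA : Set (P × S'))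
    (hRA : IsRefRel (mkImpl (fA A)) N RA)
    (hR0 : ((0 : ℕ), n0) ∈ RA)
    (hNA : NsetA ∈ N.Tran ∅ n0)
    (fwdA : ∀ p ∈ A, ∃ u, (p, u) ∈ NsetA ∧ ((1 : ℕ), u) ∈ RA)
    (bwdA : ∀ q ∈ NsetA, q.1 ∈ A ∧ ((1 : ℕ), q.2) ∈ RA)
    (htAmem : ∃ p, (p, n0) ∈ NsetA)
    (hAne : A.Nonempty) :
    False := by
  classical
  set L : Finset P := A.filter (fun p => (p, n0) ∈ NsetA) with hLdef
  have hLmem : ∀ p ∈ L, (p, n0) ∈ NsetA := fun p hp => (Finset.mem_filter.mp hp).2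
  have hLsub : ∀ p ∈ L, p ∈ A := fun p hp => (Finset.mem_filter.mp hp).1
  have hLne : L.Nonempty := by
    obtain ⟨p, hp⟩ := htAmem
    exact ⟨p, Finset.mem_filter.mpr ⟨(bwdA (p, n0) hp).1, hp⟩⟩
  have hBref : BRefines (mkImpl (gDeep A L)) N 0 n0 := by
    refine ⟨{x : ℕ × S' | x = (0, n0) ∨ (x.1 = 1 ∧ ((1 : ℕ), x.2) ∈ RA)
      ∨ (x.1 = 3 ∧ ((2 : ℕ), x.2) ∈ RA) ∨ (x.1 = 2 ∧ ((0 : ℕ), x.2) ∈ RA)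
      ∨ (x.1 = 4 ∧ ((1 : ℕ), x.2) ∈ RA) ∨ (x.1 = 5 ∧ ((2 : ℕ), x.2) ∈ RA)}, Or.inl rfl, ?_⟩
    rintro ⟨k, u⟩ hp Ms hMs
    rw [mkImpl_tran] at hMs
    have hMs' : Ms = ↑(gDeep A L k) := hMs
    subst hMs'
    rcases hp with hp | ⟨hk, hu⟩ | ⟨hk, hu⟩ | ⟨hk, hu⟩ | ⟨hk, hu⟩ | ⟨hk, hu⟩
    · -- root
      obtain ⟨rfl, rfl⟩ : k = 0 ∧ u = n0 := ⟨congrArg Prod.fst hp, congrArg Prod.snd hp⟩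
      refine ⟨NsetA, hNA, ?_, ?_⟩
      · intro q hq
        rcases Finset.mem_union.mp (Finset.mem_coe.mp hq) with hq1 | hq2
        · obtain ⟨hqA, hq2⟩ := mem_pairimg.mp hq1
          obtain ⟨v, hv, hRv⟩ := fwdA q.1 hqA
          exact ⟨v, hv, Or.inr (Or.inl ⟨hq2, hRv⟩)⟩
        · obtain ⟨hqL, hq2⟩ := mem_pairimg.mp hq2
          exact ⟨_, hLmem q.1 hqL, Or.inr (Or.inr (Or.inr (Or.inl ⟨hq2, hR0⟩)))⟩
      · intro q hq
        obtain ⟨hqA, hqR⟩ := bwdA q hq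
        exact ⟨1, Finset.mem_coe.mpr (Finset.mem_union.mpr
          (Or.inl (mem_pairimg.mpr ⟨hqA, rfl⟩))), Or.inr (Or.inl ⟨rfl, hqR⟩)⟩
    · -- k = 1 : A-then-stop
      subst hk
      obtain ⟨Nt, hNt, fwd', bwd'⟩ := chain_fwdbwd hRA (rfl :
        fA A 1 = A.image (fun p => (p, 2))) hu
      refine ⟨Nt, hNt, ?_, ?_⟩
      · intro q hq
        obtain ⟨hqA, hq2⟩ := mem_pairimg.mp (Finset.mem_coe.mp hq)
        obtain ⟨v, hv, hRv⟩ := fwd' q.1 hqA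
        exact ⟨v, hv, Or.inr (Or.inr (Or.inl ⟨hq2, hRv⟩))⟩
      · intro q hq
        obtain ⟨hqA, hqR⟩ := bwd' q hq
        exact ⟨3, Finset.mem_coe.mpr (mem_pairimg.mpr ⟨hqA, rfl⟩),
          Or.inr (Or.inr (Or.inl ⟨rfl, hqR⟩))⟩
    · -- k = 3 : dead
      subst hk
      refine ⟨∅, chain_dead hRA (rfl : fA A 2 = ∅) hu, ?_, ?_⟩
      · intro q hq
        exact absurd (Finset.mem_coe.mp hq) (Finset.notMem_empty q)
      · intro q hq
        exact absurd hq (Set.notMem_empty q)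
    · -- k = 2 : restart the chain
      subst hk
      obtain ⟨Nt, hNt, fwd', bwd'⟩ := chain_fwdbwd hRA (rfl :
        fA A 0 = A.image (fun p => (p, 1))) hu
      refine ⟨Nt, hNt, ?_, ?_⟩
      · intro q hq
        obtain ⟨hqA, hq2⟩ := mem_pairimg.mp (Finset.mem_coe.mp hq)
        obtain ⟨v, hv, hRv⟩ := fwd' q.1 hqA
        exact ⟨v, hv, Or.inr (Or.inr (Or.inr (Or.inr (Or.inl ⟨hq2, hRv⟩))))⟩
      · intro q hq
        obtain ⟨hqA, hqR⟩ := bwd' q hq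
        exact ⟨4, Finset.mem_coe.mpr (mem_pairimg.mpr ⟨hqA, rfl⟩),
          Or.inr (Or.inr (Or.inr (Or.inr (Or.inl ⟨rfl, hqR⟩))))⟩
    · -- k = 4 : second level of the restarted chain
      subst hk
      obtain ⟨Nt, hNt, fwd', bwd'⟩ := chain_fwdbwd hRA (rfl :
        fA A 1 = A.image (fun p => (p, 2))) hu
      refine ⟨Nt, hNt, ?_, ?_⟩
      · intro q hq
        obtain ⟨hqA, hq2⟩ := mem_pairimg.mp (Finset.mem_coe.mp hq)
        obtain ⟨v, hv, hRv⟩ := fwd' q.1 hqA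
        exact ⟨v, hv, Or.inr (Or.inr (Or.inr (Or.inr (Or.inr ⟨hq2, hRv⟩))))⟩
      · intro q hq
        obtain ⟨hqA, hqR⟩ := bwd' q hq
        exact ⟨5, Finset.mem_coe.mpr (mem_pairimg.mpr ⟨hqA, rfl⟩),
          Or.inr (Or.inr (Or.inr (Or.inr (Or.inr ⟨rfl, hqR⟩))))⟩
    · -- k = 5 : dead
      subst hk
      refine ⟨∅, chain_dead hRA (rfl : fA A 2 = ∅) hu, ?_, ?_⟩
      · intro q hq
        exact absurd (Finset.mem_coe.mp hq) (Finset.notMem_empty q)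
      · intro q hq
        exact absurd hq (Set.notMem_empty q)
  have hPref := (h ℕ (mkImpl (gDeep A L)) 0 (mkImpl_isImpl _)).mpr hBref
  obtain ⟨ν, R', hm', href'⟩ := hPref (∅ : Set Empty)
  obtain ⟨fw0, bw0⟩ := blow0 href' hm'
  obtain ⟨pbar, hpbar⟩ := hLne
  have h21 : ((2 : ℕ), (1 : Fin 3)) ∈ R' :=
    (fw0 (pbar, 2) (Finset.mem_union.mpr (Or.inr (mem_pairimg.mpr ⟨hpbar, rfl⟩)))).2
  obtain ⟨fw1, _⟩ := blow1 href' h21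
  obtain ⟨p0, hp0⟩ := hAne
  have h42 : ((4 : ℕ), (2 : Fin 3)) ∈ R' :=
    (fw1 (p0, 4) (mem_pairimg.mpr ⟨hp0, rfl⟩)).2
  have hempty := blow2 href' h42
  have hmem5 : ((p0, 5) : P × ℕ) ∈ gDeep A L 4 := mem_pairimg.mpr ⟨hp0, rfl⟩
  rw [hempty] at hmem5
  exact absurd hmem5 (Finset.notMem_empty _)

end Main

theorem deParam_blowup_unavoidable {P : Type} [Fintype P] [DecidableEq P]
    {S' : Type} [Fintype S'] (N : BMTS P S') (n0 : S')
    (h : ∀ (SI : Type) (I : BMTS P SI) (i : SI), I.IsImplementation →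
      (PRefines I (blowupPMTS P) i 0 ↔ BRefines I N i n0)) :
    2 ^ Fintype.card P ≤ Fintype.card S' := by
  classical
  have key : ∀ A : Finset P, ∃ R : Set (ℕ × S'), ∃ Nset : Set (P × S'),
      IsRefRel (mkImpl (fA A)) N R ∧ ((0 : ℕ), n0) ∈ R ∧ Nset ∈ N.Tran ∅ n0 ∧
      (∀ p ∈ A, ∃ u, (p, u) ∈ Nset ∧ ((1 : ℕ), u) ∈ R) ∧
      (∀ q ∈ Nset, q.1 ∈ A ∧ ((1 : ℕ), q.2) ∈ R) := by
    intro A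
    obtain ⟨R, hmem, href⟩ := (h ℕ (mkImpl (fA A)) 0 (mkImpl_isImpl _)).mp (fA_refines A)
    obtain ⟨Nset, hNset, fwd, bwd⟩ := chain_fwdbwd href (rfl :
      fA A 0 = A.image (fun p => (p, 1))) hmem
    exact ⟨R, Nset, href, hmem, hNset, fwd, bwd⟩
  choose R Nset href hmem hNset fwd bwd using key
  have hta : ∀ A : Finset P, A.Nonempty →
      ∃ u, (∃ p, (p, u) ∈ Nset A) ∧ ((1 : ℕ), u) ∈ R A := by
    intro A hA
    obtain ⟨p, hp⟩ := hA
    obtain ⟨u, hu, hR⟩ := fwd A p hp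
    exact ⟨u, ⟨p, hu⟩, hR⟩
  have hta' : ∀ A : Finset P, ∃ u : S',
      A.Nonempty → (∃ p, (p, u) ∈ Nset A) ∧ ((1 : ℕ), u) ∈ R A := by
    intro A
    by_cases hA : A.Nonempty
    · obtain ⟨u, h1, h2⟩ := hta A hA
      exact ⟨u, fun _ => ⟨h1, h2⟩⟩
    · exact ⟨n0, fun hA' => absurd hA' hA⟩
  choose t ht using hta'
  have ht1 : ∀ A : Finset P, A.Nonempty → ∃ p, (p, t A) ∈ Nset A := fun A hA => (ht A hA).1
  have ht2 : ∀ A : Finset P, A.Nonempty → ((1 : ℕ), t A) ∈ R A := fun A hA => (ht A hA).2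
  have hne : ∀ A : Finset P, A.Nonempty → t A ≠ n0 := by
    intro A hA habs
    refine deep_false N n0 h A (R A) (Nset A) (href A) (hmem A) (hNset A) (fwd A) (bwd A)
      ?_ hA
    obtain ⟨p, hp⟩ := ht1 A hA
    exact ⟨p, habs ▸ hp⟩
  have hinj : Function.Injective (fun A : Finset P => if hA : A.Nonempty then t A else n0) := by
    intro A B hAB
    simp only [] at hAB
    by_cases hA : A.Nonempty <;> by_cases hB : B.Nonempty
    · rw [dif_pos hA, dif_pos hB] at hAB
      refine mix_eq N n0 h A B (R A) (R B) (Nset A) (t A) (href A) (href B) (hNset A)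
        (fwd A) (bwd A) (ht1 A hA) ?_
      rw [hAB]
      exact ht2 B hB
    · rw [dif_pos hA, dif_neg hB] at hAB
      exact absurd hAB (hne A hA)
    · rw [dif_neg hA, dif_pos hB] at hAB
      exact absurd hAB.symm (hne B hB)
    · rw [Finset.not_nonempty_iff_eq_empty.mp hA, Finset.not_nonempty_iff_eq_empty.mp hB]
  calc 2 ^ Fintype.card P = Fintype.card (Finset P) := (Fintype.card_finset).symm
    _ ≤ Fintype.card S' := Fintype.card_le_of_injective _ hinj
end
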